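/- Let G be a centerless group and A ⊆ G such that (G, A) is a special pair, and let ⟨G^α⟩ be the automorphism tower of G. Then for every ordinal α, (G^α, A) is a special pair, and the centralizer of A in G^α is trivial: C_{G^α}(A) = {e}. -/

import Mathlib

universe u

/-- The automorphism tower of a centerless group `G`: an ordinal-indexed increasing
continuous chain of groups, starting at `G`, where each successor stage is (identified
with) the automorphism group of the previous stage via the conjugation embedding. -/
structure AutTower (G : Type u) [Group G] where
  /-- the `o`-th stage `G^o` of the tower -/
  Stage : Ordinal.{u} → GrpCat.{u}
  /-- the inclusion maps of the tower -/
  map : ∀ ⦃o₁ o₂ : Ordinal.{u}⦄, o₁ ≤ o₂ → (↥(Stage o₁) →* ↥(Stage o₂))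
  map_id : ∀ (o : Ordinal.{u}) (x : ↥(Stage o)), map le_rfl x = x
  map_comp : ∀ ⦃o₁ o₂ o₃ : Ordinal.{u}⦄ (h₁ : o₁ ≤ o₂) (h₂ : o₂ ≤ o₃) (x : ↥(Stage o₁)),
      map h₂ (map h₁ x) = map (h₁.trans h₂) x
  map_injective : ∀ ⦃o₁ o₂ : Ordinal.{u}⦄ (h : o₁ ≤ o₂), Function.Injective (map h)
  /-- the identification of `G` with the `0`-th stage -/
  emb0 : G ≃* ↥(Stage 0)
  /-- the identification of the `(o+1)`-st stage with `Aut(G^o)` -/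
  succIso : ∀ o : Ordinal.{u}, ↥(Stage (o + 1)) ≃* MulAut ↥(Stage o)
  /-- under the above identification, the inclusion `G^o ≤ G^{o+1}` is `g ↦` conjugation by `g` -/
  succIso_map : ∀ (o : Ordinal.{u}) (x : ↥(Stage o)),
      succIso o (map (le_self_add (a := o) (b := 1)) x) = MulAut.conj x
  /-- at limit stages the tower is continuous: `G^δ = ⋃_{α<δ} G^α` -/
  limit_covers : ∀ (o : Ordinal.{u}), Order.IsSuccLimit o → ∀ x : ↥(Stage o),
      ∃ (o' : Ordinal.{u}) (h : o' < o), x ∈ Set.range (map h.le)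

namespace AutTower

variable {G : Type u} [Group G]

/-- the embedding of `G` into the `o`-th stage of its automorphism tower -/
def embed (T : AutTower G) (o : Ordinal.{u}) : G →* ↥(T.Stage o) :=
  (T.map (zero_le (a := o))).comp T.emb0.toMonoidHom

/-- `G^{o+1} = G^o`, i.e. the inclusion of stage `o` into stage `o+1` is onto -/
def StabilizesAt (T : AutTower G) (o : Ordinal.{u}) : Prop :=
  Function.Surjective (T.map (le_self_add (a := o) (b := 1)))

end AutTower

section SpecialPair

variable {H : Type u} [Group H]

/-- There is a group isomorphism from `⟨A ∪ {x}⟩` onto `⟨A ∪ {y}⟩` fixing `A`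
pointwise and sending `x` to `y`. -/
def FixesAndSends (A : Set H) (x y : H) : Prop :=
  ∃ φ : ↥(Subgroup.closure (A ∪ {x})) ≃* ↥(Subgroup.closure (A ∪ {y})),
    (∀ g : ↥(Subgroup.closure (A ∪ {x})), (g : H) ∈ A → ((φ g : H) = (g : H))) ∧
    (∀ g : ↥(Subgroup.closure (A ∪ {x})), (g : H) = x → ((φ g : H) = y))

end SpecialPair

/-- `(G, A)` is a special pair: whenever there is an isomorphism from `⟨A ∪ {x}⟩`
onto `⟨A ∪ {y}⟩` fixing `A` pointwise and sending `x` to `y`, then `x = y`. -/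
def IsSpecialPair (H : Type u) [Group H] (A : Set H) : Prop :=
  ∀ x y : H, FixesAndSends A x y → x = y

/- ### Auxiliary lemmas -/

/-- An injective homomorphism out of `⟨A ∪ {u}⟩` which fixes `A` pointwise and sends `u`
to `v` witnesses `FixesAndSends A u v`. -/
theorem fas_of_hom {K : Type u} [Group K] (A : Set K) (u v : K)
    (f : ↥(Subgroup.closure (A ∪ {u})) →* K) (hinj : Function.Injective f)
    (hA : ∀ g : ↥(Subgroup.closure (A ∪ {u})), (g : K) ∈ A → f g = (g : K))
    (hu : ∀ g : ↥(Subgroup.closure (A ∪ {u})), (g : K) = u → f g = v) :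
    FixesAndSends A u v := by
  have himg : ⇑f '' (((↑) : ↥(Subgroup.closure (A ∪ {u})) → K) ⁻¹' (A ∪ {u})) = A ∪ {v} := by
    ext k
    constructor
    · rintro ⟨g, hg, rfl⟩
      rcases hg with hg | hg
      · exact Or.inl (by rw [hA g hg]; exact hg)
      · exact Or.inr (by rw [hu g hg]; rfl)
    · rintro (hk | hk)
      · exact ⟨⟨k, Subgroup.subset_closure (Or.inl hk)⟩, Or.inl hk, hA _ hk⟩
      · refine ⟨⟨u, Subgroup.subset_closure (Or.inr rfl)⟩, Or.inr rfl, ?_⟩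
        rw [hu _ rfl]; exact hk.symm
  have hrange : f.range = Subgroup.closure (A ∪ {v}) := by
    rw [MonoidHom.range_eq_map, ← Subgroup.closure_closure_coe_preimage (k := A ∪ {u}),
        MonoidHom.map_closure, himg]
  let e : ↥(Subgroup.closure (A ∪ {u})) ≃* ↥(Subgroup.closure (A ∪ {v})) :=
    (MonoidHom.ofInjective hinj).trans (MulEquiv.subgroupCongr hrange)
  have he : ∀ g, ((e g : K)) = f g := fun g => by
    simp only [e, MulEquiv.trans_apply, MulEquiv.subgroupCongr_apply, MonoidHom.ofInjective_apply]
  exact ⟨e, fun g hg => by rw [he]; exact hA g hg, fun g hg => by rw [he]; exact hu g hg⟩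

/-- `FixesAndSends` pulls back along injective homomorphisms. -/
theorem fas_pullback {H K : Type u} [Group H] [Group K] (f : H →* K) (hf : Function.Injective f)
    (A : Set H) (x y : H) (h : FixesAndSends (⇑f '' A) (f x) (f y)) :
    FixesAndSends A x y := by
  obtain ⟨φ, hφA, hφx⟩ := h
  have hcl : ∀ z : H, Subgroup.map f (Subgroup.closure (A ∪ {z}))
      = Subgroup.closure (⇑f '' A ∪ {f z}) := by
    intro z; rw [MonoidHom.map_closure, Set.image_union, Set.image_singleton]
  let e1 := (Subgroup.closure (A ∪ {x})).equivMapOfInjective f hf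
  let e2 := (Subgroup.closure (A ∪ {y})).equivMapOfInjective f hf
  let c1 := MulEquiv.subgroupCongr (hcl x)
  let c2 := MulEquiv.subgroupCongr (hcl y).symm
  let g : ↥(Subgroup.closure (A ∪ {x})) →* H :=
    (Subgroup.closure (A ∪ {y})).subtype.comp
      (e2.symm.toMonoidHom.comp (c2.toMonoidHom.comp (φ.toMonoidHom.comp
        (c1.toMonoidHom.comp e1.toMonoidHom))))
  have hsymm : ∀ t, f ((e2.symm t : H)) = (t : K) := by
    intro t
    have := Subgroup.coe_equivMapOfInjective_apply (Subgroup.closure (A ∪ {y})) f hf (e2.symm t)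
    rw [this.symm]
    rw [MulEquiv.apply_symm_apply]
  have hcoe1 : ∀ s, ((c1 (e1 s) : K)) = f (s : H) := by
    intro s
    rw [MulEquiv.subgroupCongr_apply]
    exact Subgroup.coe_equivMapOfInjective_apply _ f hf s
  have hkey : ∀ s, f (g s) = (φ (c1 (e1 s)) : K) := by
    intro s
    show f ((e2.symm (c2 (φ (c1 (e1 s)))) : H)) = _
    rw [hsymm, MulEquiv.subgroupCongr_apply]
  have hginj : Function.Injective g := by
    intro a b hab
    have : f (g a) = f (g b) := by rw [hab]
    rw [hkey, hkey] at this
    have h2 : c1 (e1 a) = c1 (e1 b) := φ.injective (Subtype.ext this)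
    exact e1.injective (c1.injective h2)
  apply fas_of_hom A x y g hginj
  · intro s hs
    apply hf
    rw [hkey]
    have hmem : ((c1 (e1 s) : K)) ∈ ⇑f '' A := by rw [hcoe1]; exact ⟨s, hs, rfl⟩
    rw [hφA _ hmem, hcoe1]
  · intro s hs
    apply hf
    rw [hkey]
    have hx : ((c1 (e1 s) : K)) = f x := by rw [hcoe1, hs]
    rw [hφx _ hx]

/-- If `(K, A)` is special, an automorphism of `K` fixing `A` pointwise is the identity. -/
theorem aut_fixing_eq_id {K : Type u} [Group K] (A : Set K) (hspec : IsSpecialPair K A)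
    (Φ : MulAut K) (hfix : ∀ b ∈ A, Φ b = b) (g : K) : Φ g = g := by
  refine (hspec g (Φ g) ?_).symm
  refine fas_of_hom A g (Φ g) (Φ.toMonoidHom.comp (Subgroup.closure (A ∪ {g})).subtype)
    ?_ ?_ ?_
  · intro a b hab
    exact Subtype.ext (Φ.injective hab)
  · intro s hs; exact hfix _ hs
  · intro s hs; show Φ (s : K) = Φ g; rw [hs]

/-- If `(K, A)` is special and `K` is centerless, then `C_K(A)` is trivial. -/
theorem centralizer_eq_bot_of_special {K : Type u} [Group K] (A : Set K)
    (hspec : IsSpecialPair K A) (hcen : Subgroup.center K = ⊥) :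
    Subgroup.centralizer A = ⊥ := by
  rw [eq_bot_iff]
  intro c hc
  have hcomm : ∀ x : K, x = c * x * c⁻¹ := by
    intro x
    refine hspec x (c * x * c⁻¹) ?_
    refine fas_of_hom A x (c * x * c⁻¹)
      ((MulAut.conj c).toMonoidHom.comp (Subgroup.closure (A ∪ {x})).subtype) ?_ ?_ ?_
    · intro a b hab
      exact Subtype.ext ((MulAut.conj c).injective hab)
    · intro s hs
      show c * (s : K) * c⁻¹ = (s : K)
      have := Subgroup.mem_centralizer_iff.mp hc _ hs
      rw [← this]; group
    · intro s hs
      show c * (s : K) * c⁻¹ = c * x * c⁻¹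
      rw [hs]
  have : c ∈ Subgroup.center K := by
    rw [Subgroup.mem_center_iff]
    intro g
    have := hcomm g
    calc g * c = (c * g * c⁻¹) * c := by rw [← this]
    _ = c * g := by group
  rw [hcen] at this
  simpa using this

namespace AutTower

variable {G : Type u} [Group G]

theorem embed_map (T : AutTower G) {o₁ o₂ : Ordinal.{u}} (h : o₁ ≤ o₂) (g : G) :
    T.map h (T.embed o₁ g) = T.embed o₂ g :=
  T.map_comp (zero_le (a := o₁)) h (T.emb0 g)

theorem image_embed (T : AutTower G) {o₁ o₂ : Ordinal.{u}} (h : o₁ ≤ o₂) (A : Set G) :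
    ⇑(T.embed o₂) '' A = ⇑(T.map h) '' (⇑(T.embed o₁) '' A) := by
  rw [← Set.image_comp]
  exact Set.image_congr fun a _ => (T.embed_map h a).symm

theorem embed_injective (T : AutTower G) (o : Ordinal.{u}) :
    Function.Injective (T.embed o) := fun a b hab =>
  T.emb0.injective (T.map_injective (zero_le (a := o)) hab)

end AutTower

/-- Conjugating a conjugation automorphism. -/
theorem mulAut_conj_conj {K : Type u} [Group K] (X : MulAut K) (b : K) :
    X * MulAut.conj b * X⁻¹ = MulAut.conj (X b) := by
  ext h
  simp [MulAut.mul_apply, MulAut.conj_apply, map_mul, map_inv, MulAut.inv_def]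

/-- If `G` is centerless and `(G, A)` is a special pair, then for every ordinal `α`,
`(G^α, A)` is a special pair and the centralizer of `A` in `G^α` is trivial:
`C_{G^α}(A) = {e}` (where `A` is regarded as a subset of `G^α` via the tower
embedding). -/
theorem specialPair_stage_and_centralizer_trivial {G : Type u} [Group G]
    (hG : Subgroup.center G = ⊥) (A : Set G) (hspec : IsSpecialPair G A)
    (T : AutTower G) (α : Ordinal.{u}) :
    IsSpecialPair ↥(T.Stage α) (⇑(T.embed α) '' A) ∧
      Subgroup.centralizer (⇑(T.embed α) '' A) = ⊥ := by
  induction α using Ordinal.limitRecOn with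
  | zero =>
    -- base case
    have hsurj : Function.Surjective (T.embed 0) := by
      intro x
      refine ⟨T.emb0.symm x, ?_⟩
      show T.map (zero_le (a := (0 : Ordinal.{u}))) (T.emb0 (T.emb0.symm x)) = x
      rw [MulEquiv.apply_symm_apply]
      exact T.map_id 0 x
    have hspec0 : IsSpecialPair ↥(T.Stage 0) (⇑(T.embed 0) '' A) := by
      intro x y hxy
      obtain ⟨x₀, rfl⟩ := hsurj x
      obtain ⟨y₀, rfl⟩ := hsurj y
      have := fas_pullback (T.embed 0) (T.embed_injective 0) A x₀ y₀ hxy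
      rw [hspec x₀ y₀ this]
    have hZ0 : Subgroup.center ↥(T.Stage 0) = ⊥ := by
      rw [eq_bot_iff]
      intro c hc
      have h1 : T.emb0.symm c ∈ Subgroup.center G := by
        rw [Subgroup.mem_center_iff]
        intro g
        apply T.emb0.injective
        rw [map_mul, map_mul, MulEquiv.apply_symm_apply]
        exact Subgroup.mem_center_iff.mp hc (T.emb0 g)
      rw [hG] at h1
      have h2 : T.emb0.symm c = 1 := by simpa using h1
      have : c = T.emb0 1 := by rw [← h2, MulEquiv.apply_symm_apply]
      simp [this]
    exact ⟨hspec0, centralizer_eq_bot_of_special _ hspec0 hZ0⟩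
  | add_one o ih =>
    obtain ⟨ihs, ihc⟩ := ih
    set f : ↥(T.Stage o) →* ↥(T.Stage (o + 1)) := T.map (le_self_add (a := o) (b := 1)) with hf
    have hfinj : Function.Injective f := T.map_injective _
    set e := T.succIso o
    set Aα : Set ↥(T.Stage o) := ⇑(T.embed o) '' A with hAα
    set Ap : Set ↥(T.Stage (o + 1)) := ⇑(T.embed (o + 1)) '' A with hApdef
    have hAp : Ap = ⇑f '' Aα := T.image_embed (le_self_add (a := o) (b := 1)) A
    -- the key conjugation identity
    have key1 : ∀ (x : ↥(T.Stage (o + 1))) (b : ↥(T.Stage o)),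
        x * f b * x⁻¹ = f ((e x) b) := by
      intro x b
      apply e.injective
      rw [map_mul, map_mul, map_inv]
      show e x * e (f b) * (e x)⁻¹ = e (f (e x b))
      rw [T.succIso_map, T.succIso_map, mulAut_conj_conj]
    -- elements of the center of stage o are trivial
    have hZH : ∀ z : ↥(T.Stage o), z ∈ Subgroup.center ↥(T.Stage o) → z = 1 := by
      intro z hz
      have := Subgroup.center_le_centralizer Aα hz
      rw [ihc] at this
      simpa using this
    -- an automorphism of stage o fixing Ap-image... : commuting with all f b for b ∈ Aα fixes Aα
    have fixAα : ∀ c : ↥(T.Stage (o + 1)), c ∈ Subgroup.centralizer Ap →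
        ∀ b ∈ Aα, (e c) b = b := by
      intro c hc b hb
      have hfb : f b ∈ Ap := by rw [hAp]; exact ⟨b, hb, rfl⟩
      have hcomm : f b * c = c * f b := Subgroup.mem_centralizer_iff.mp hc _ hfb
      have h1 : c * f b * c⁻¹ = f b := by rw [← hcomm]; group
      have h2 := key1 c b
      apply hfinj
      rw [← h2, h1]
    have hcent : Subgroup.centralizer Ap = ⊥ := by
      rw [eq_bot_iff]
      intro c hc
      have hΦ : ∀ g, (e c) g = g :=
        fun g => aut_fixing_eq_id Aα ihs (e c) (fixAα c hc) g
      have h1 : e c = 1 := by ext g; exact hΦ g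
      have : c = e.symm 1 := by rw [← h1, MulEquiv.symm_apply_apply]
      rw [this, map_one]
      exact Subgroup.one_mem _
    have hspec' : IsSpecialPair ↥(T.Stage (o + 1)) Ap := by
      
      intro x y hxy
      obtain ⟨φ, hφA, hφx⟩ := hxy
      have hxmem : x ∈ Subgroup.closure (Ap ∪ {x}) := Subgroup.subset_closure (Or.inr rfl)
      have step1 : ∀ b ∈ Aα, (e x) b = (e y) b := by
        intro b hb
        have hfb : f b ∈ Ap := by rw [hAp]; exact ⟨b, hb, rfl⟩
        have hfbx : f b ∈ Subgroup.closure (Ap ∪ {x}) := Subgroup.subset_closure (Or.inl hfb)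
        have humem : x * f b * x⁻¹ ∈ Subgroup.closure (Ap ∪ {x}) :=
          mul_mem (mul_mem hxmem hfbx) (inv_mem hxmem)
        have hφu : (φ ⟨x * f b * x⁻¹, humem⟩ : ↥(T.Stage (o + 1))) = y * f b * y⁻¹ := by
          have heq : (⟨x * f b * x⁻¹, humem⟩ : ↥(Subgroup.closure (Ap ∪ {x}))) =
              ⟨x, hxmem⟩ * ⟨f b, hfbx⟩ * (⟨x, hxmem⟩)⁻¹ := rfl
          rw [heq, map_mul, map_mul, map_inv]
          push_cast
          rw [hφx ⟨x, hxmem⟩ rfl, hφA ⟨f b, hfbx⟩ hfb]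
        have hsub : Subgroup.closure (Ap ∪ {x * f b * x⁻¹}) ≤ Subgroup.closure (Ap ∪ {x}) := by
          rw [Subgroup.closure_le]
          rintro z (hz | hz)
          · exact Subgroup.subset_closure (Or.inl hz)
          · rw [Set.mem_singleton_iff] at hz; rw [hz]; exact humem
        have hfas : FixesAndSends Ap (x * f b * x⁻¹) (y * f b * y⁻¹) := by
          refine fas_of_hom Ap _ _
            ((Subgroup.closure (Ap ∪ {y})).subtype.comp
              (φ.toMonoidHom.comp (Subgroup.inclusion hsub))) ?_ ?_ ?_
          · intro a b' hab
            exact Subgroup.inclusion_injective hsub (φ.injective (Subtype.ext hab))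
          · intro s hs
            show ((φ (Subgroup.inclusion hsub s) : ↥(T.Stage (o + 1)))) = (s : ↥(T.Stage (o + 1)))
            have : ((Subgroup.inclusion hsub s : ↥(Subgroup.closure (Ap ∪ {x}))) :
                ↥(T.Stage (o + 1))) = (s : ↥(T.Stage (o + 1))) := Subgroup.coe_inclusion hsub s
            rw [← this]
            exact hφA _ (by rw [this]; exact hs)
          · intro s hs
            show ((φ (Subgroup.inclusion hsub s) : ↥(T.Stage (o + 1)))) = y * f b * y⁻¹
            have hincl : Subgroup.inclusion hsub s = ⟨x * f b * x⁻¹, humem⟩ := by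
              apply Subtype.ext
              rw [Subgroup.coe_inclusion, hs]
            rw [hincl, hφu]
        rw [key1 x b, key1 y b, hAp] at hfas
        exact ihs _ _ (fas_pullback f hfinj Aα _ _ hfas)
      -- now conclude x = y
      have hΘfix : ∀ b ∈ Aα, ((e y)⁻¹ * (e x)) b = b := by
        intro b hb
        show (e y)⁻¹ ((e x) b) = b
        rw [step1 b hb]
        exact (e y).symm_apply_apply b
      have hΘ : ∀ g, ((e y)⁻¹ * (e x)) g = g :=
        fun g => aut_fixing_eq_id Aα ihs _ hΘfix g
      apply e.injective
      ext g
      have := hΘ g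
      show (e x) g = (e y) g
      calc (e x) g = (e y) ((e y)⁻¹ ((e x) g)) := ((e y).apply_symm_apply _).symm
      _ = (e y) g := congrArg (e y) this
    exact ⟨hspec', hcent⟩
  | limit o ho ih =>
    have cover : ∀ x : ↥(T.Stage o), ∃ (o' : Ordinal.{u}) (h : o' < o)
        (x' : ↥(T.Stage o')), T.map h.le x' = x := by
      intro x
      obtain ⟨o', h, x', hx⟩ := T.limit_covers o ho x
      exact ⟨o', h, x', hx⟩
    constructor
    · intro x y hxy
      obtain ⟨o₁, h₁, x₁, rfl⟩ := cover x
      obtain ⟨o₂, h₂, y₂, rfl⟩ := cover y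
      have h₃ : max o₁ o₂ < o := max_lt h₁ h₂
      have hx3 : T.map h₁.le x₁ = T.map h₃.le (T.map (le_max_left o₁ o₂) x₁) :=
        (T.map_comp (le_max_left o₁ o₂) h₃.le x₁).symm
      have hy3 : T.map h₂.le y₂ = T.map h₃.le (T.map (le_max_right o₁ o₂) y₂) :=
        (T.map_comp (le_max_right o₁ o₂) h₃.le y₂).symm
      have hxy' : FixesAndSends (⇑(T.map h₃.le) '' (⇑(T.embed (max o₁ o₂)) '' A))
          (T.map h₃.le (T.map (le_max_left o₁ o₂) x₁))
          (T.map h₃.le (T.map (le_max_right o₁ o₂) y₂)) := by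
        rw [← T.image_embed h₃.le A, ← hx3, ← hy3]
        exact hxy
      have := fas_pullback (T.map h₃.le) (T.map_injective h₃.le) _ _ _ hxy'
      have heq := (ih (max o₁ o₂) h₃).1 _ _ this
      rw [hx3, hy3, heq]
    · rw [eq_bot_iff]
      intro c hc
      obtain ⟨o', h', c', rfl⟩ := cover c
      have hc' : c' ∈ Subgroup.centralizer (⇑(T.embed o') '' A) := by
        rw [Subgroup.mem_centralizer_iff]
        rintro b ⟨a, ha, rfl⟩
        apply T.map_injective h'.le
        rw [map_mul, map_mul, T.embed_map h'.le a]
        exact Subgroup.mem_centralizer_iff.mp hc _ ⟨a, ha, rfl⟩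
      rw [(ih o' h').2] at hc'
      have : c' = 1 := by simpa using hc'
      rw [this, map_one]
      exact Subgroup.one_mem _
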